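/- Let 0 < α < 1 and μ > 0, and define s(t) = E_α(−μ t^α) for t ≥ 0, where E_α = E_{α,1} is the Mittag-Leffler function. Then s satisfies the scalar Volterra equation s(t) + μ·(g_α ∗ s)(t) = 1 for all t ≥ 0; that is, s(t) + (μ/Γ(α)) ∫_0^t (t−τ)^{α−1} E_α(−μ τ^α) dτ = 1. -/

import Mathlib

open MeasureTheory Set

/-- Laplace convolution on `(0, ∞)`: `(f ∗ g)(t) = ∫_0^t f(t−τ) g(τ) dτ`. -/
noncomputable def lconv (f g : ℝ → ℝ) (t : ℝ) : ℝ := ∫ τ in (0:ℝ)..t, f (t - τ) * g τ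

/-- `g μ t = t^(μ-1)/Γ(μ)`. -/
noncomputable def g (μ t : ℝ) : ℝ := t ^ (μ - 1) / Real.Gamma μ

/-- Two-parameter Mittag-Leffler function `E_{α,β}(x) = ∑_{k=0}^∞ x^k/Γ(α k + β)`. -/
noncomputable def mittagLeffler (α β x : ℝ) : ℝ := ∑' k : ℕ, x ^ k / Real.Gamma (α * k + β)


lemma ml_summable {α c : ℝ} (hα : 0 < α) (hc : 1 ≤ c) (x : ℝ) :
    Summable (fun k : ℕ => x ^ k / Real.Gamma (α * k + c)) := by
  have hΓpos : ∀ k : ℕ, 0 < Real.Gamma (α * k + c) := by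
    intro k
    have h1 : (0:ℝ) ≤ α * k := mul_nonneg hα.le (Nat.cast_nonneg k)
    exact Real.Gamma_pos_of_pos (by linarith)
  rw [← summable_abs_iff]
  have habs : ∀ k : ℕ, |x ^ k / Real.Gamma (α * k + c)| = |x| ^ k / Real.Gamma (α * k + c) := by
    intro k; rw [abs_div, abs_pow, abs_of_pos (hΓpos k)]
  simp only [habs]
  set r := |x| with hrdef
  have hr0 : 0 ≤ r := abs_nonneg x
  set R : ℝ := (2 * r + 2) ^ (α⁻¹ : ℝ) with hRdef
  have h2r : (1:ℝ) ≤ 2 * r + 2 := by linarith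
  have h2r0 : (0:ℝ) < 2 * r + 2 := by linarith
  have hR1 : 1 ≤ R := Real.one_le_rpow h2r (by positivity)
  have hR0 : 0 < R := lt_of_lt_of_le one_pos hR1
  have hRα : R ^ α = 2 * r + 2 := by
    rw [hRdef, ← Real.rpow_mul h2r0.le, inv_mul_cancel₀ hα.ne', Real.rpow_one]
  set q : ℝ := r / (2 * r + 2) with hqdef
  have hq0 : 0 ≤ q := div_nonneg hr0 h2r0.le
  have hq1 : q < 1 := by rw [hqdef, div_lt_one h2r0]; linarith
  set K : ℕ := ⌈α⁻¹ * 2⌉₊ with hKdef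
  have hKα : (2:ℝ) ≤ α * K := by
    have h1 : (α⁻¹ * 2 : ℝ) ≤ K := Nat.le_ceil _
    have h2 := mul_le_mul_of_nonneg_left h1 hα.le
    rwa [← mul_assoc, mul_inv_cancel₀ hα.ne', one_mul] at h2
  refine (summable_nat_add_iff K).mp ?_
  refine Summable.of_nonneg_of_le (fun n => by positivity) ?_
    (((summable_geometric_of_lt_one hq0 hq1).mul_left (Real.exp R * R)))
  intro n
  set N := n + K with hNdef
  have hNK : (K:ℝ) ≤ N := by
    rw [hNdef]; push_cast; linarith [Nat.cast_nonneg (α := ℝ) n]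
  have hαN : (2:ℝ) ≤ α * N := le_trans hKα (mul_le_mul_of_nonneg_left hNK hα.le)
  set y := α * N + c with hydef
  have hy3 : (3:ℝ) ≤ y := by rw [hydef]; linarith
  set m : ℕ := ⌊y⌋₊ with hmdef
  have hm2 : 2 ≤ m := Nat.le_floor (by exact_mod_cast (by linarith : (2:ℝ) ≤ y))
  have hmy : (m:ℝ) ≤ y := Nat.floor_le (by linarith)
  have hym : y < m + 1 := Nat.lt_floor_add_one y
  have hΓm : Real.Gamma m ≤ Real.Gamma y := by
    refine Real.Gamma_strictMonoOn_Ici.monotoneOn ?_ ?_ hmy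
    · exact mem_Ici.mpr (by exact_mod_cast hm2)
    · exact mem_Ici.mpr (by linarith)
  have hcast : ((m - 1 : ℕ) : ℝ) + 1 = (m : ℝ) := by
    have h1 : 1 ≤ m := by omega
    push_cast [Nat.cast_sub h1]; ring
  have hΓmval : Real.Gamma m = (Nat.factorial (m-1)) := by
    rw [← hcast]; exact Real.Gamma_nat_eq_factorial (m - 1)
  have hfact : R ^ (m - 1 : ℕ) ≤ Real.exp R * (Nat.factorial (m-1)) := by
    have hsum := Real.sum_le_exp_of_nonneg hR0.le m
    have hterm : R ^ (m - 1 : ℕ) / (Nat.factorial (m-1)) ≤ ∑ i ∈ Finset.range m, R ^ i / (Nat.factorial i) :=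
      Finset.single_le_sum (f := fun i => R ^ i / (Nat.factorial i : ℝ)) (fun i _ => by positivity)
        (Finset.mem_range.mpr (by omega))
    have := le_trans hterm hsum
    rw [div_le_iff₀ (by positivity)] at this
    linarith
  have hΓy : 0 < Real.Gamma y := Real.Gamma_pos_of_pos (by linarith)
  -- main chain
  have step1 : r ^ N / Real.Gamma y ≤ r ^ N / ((Nat.factorial (m-1)) : ℝ) := by
    apply div_le_div_of_nonneg_left (by positivity) (by positivity)
    rw [← hΓmval]; exact hΓm
  have step2 : r ^ N / ((Nat.factorial (m-1)) : ℝ) ≤ (Real.exp R * r ^ N) / R ^ (m - 1 : ℕ) := by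
    rw [div_le_div_iff₀ (by positivity) (by positivity)]
    calc r ^ N * R ^ (m - 1 : ℕ) ≤ r ^ N * (Real.exp R * (Nat.factorial (m-1))) :=
          mul_le_mul_of_nonneg_left hfact (by positivity)
      _ = Real.exp R * r ^ N * (Nat.factorial (m-1)) := by ring
  have hm1cast : (α * N - 1 : ℝ) ≤ ((m - 1 : ℕ) : ℝ) := by
    have h1 : 1 ≤ m := by omega
    rw [Nat.cast_sub h1]
    push_cast
    have : y - 1 < m := by linarith
    rw [hydef] at this
    linarith
  have hRpow : R ^ (α * N - 1 : ℝ) ≤ R ^ (m - 1 : ℕ) := by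
    rw [← Real.rpow_natCast R (m - 1)]
    exact Real.rpow_le_rpow_of_exponent_le hR1 hm1cast
  have hRval : R ^ (α * N - 1 : ℝ) = (2 * r + 2) ^ (N : ℕ) / R := by
    rw [show (α * N - 1 : ℝ) = α * N - 1 from rfl, Real.rpow_sub hR0, Real.rpow_one]
    congr 1
    rw [Real.rpow_mul hR0.le, hRα, Real.rpow_natCast]
  have step3 : (Real.exp R * r ^ N) / R ^ (m - 1 : ℕ) ≤ (Real.exp R * r ^ N) / R ^ (α * N - 1 : ℝ) :=
    div_le_div_of_nonneg_left (by positivity) (Real.rpow_pos_of_pos hR0 _) hRpow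
  have step4 : (Real.exp R * r ^ N) / R ^ (α * N - 1 : ℝ) = (Real.exp R * R) * q ^ N := by
    rw [hRval, hqdef, div_pow, div_div_eq_mul_div]
    ring
  have hqN : q ^ N ≤ q ^ n := by
    rw [hNdef]
    exact pow_le_pow_of_le_one hq0 hq1.le (by omega)
  calc r ^ (n + K) / Real.Gamma (α * ↑(n + K) + c)
      = r ^ N / Real.Gamma y := rfl
    _ ≤ (Real.exp R * R) * q ^ N := by
        refine le_trans step1 (le_trans step2 (le_trans step3 (le_of_eq step4)))
    _ ≤ (Real.exp R * R) * q ^ n := by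
        exact mul_le_mul_of_nonneg_left hqN (by positivity)


lemma beta_eval {a b T : ℝ} (ha : 0 < a) (hb : 0 < b) (hT : 0 < T) :
    ∫ τ in (0:ℝ)..T, τ ^ (a - 1) * (T - τ) ^ (b - 1) =
      Real.Gamma a * Real.Gamma b / Real.Gamma (a + b) * T ^ (a + b - 1) := by
  have h1 := Complex.betaIntegral_scaled (a:ℂ) (b:ℂ) hT
  have h2 := Complex.Gamma_mul_Gamma_eq_betaIntegral (s := (a:ℂ)) (t := (b:ℂ))
    (by simpa using ha) (by simpa using hb)
  have hΓab : Complex.Gamma ((a:ℂ) + (b:ℂ)) = ((Real.Gamma (a+b) : ℝ) : ℂ) := by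
    rw [← Complex.ofReal_add, Complex.Gamma_ofReal]
  have hΓabpos : (0:ℝ) < Real.Gamma (a + b) := Real.Gamma_pos_of_pos (by linarith)
  have hΓabne : Complex.Gamma ((a:ℂ) + (b:ℂ)) ≠ 0 := by
    rw [hΓab]; exact_mod_cast hΓabpos.ne'
  have hbeta : Complex.betaIntegral a b =
      ((Real.Gamma a * Real.Gamma b / Real.Gamma (a+b) : ℝ) : ℂ) := by
    rw [Complex.ofReal_div, Complex.ofReal_mul, ← Complex.Gamma_ofReal, ← Complex.Gamma_ofReal,
      ← hΓab, eq_div_iff hΓabne, mul_comm]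
    exact h2.symm
  have hL : (∫ x in (0:ℝ)..T, (x:ℂ) ^ ((a:ℂ) - 1) * ((T:ℂ) - (x:ℂ)) ^ ((b:ℂ) - 1))
      = ((∫ τ in (0:ℝ)..T, τ ^ (a - 1) * (T - τ) ^ (b - 1) : ℝ) : ℂ) := by
    rw [← intervalIntegral.integral_ofReal]
    refine intervalIntegral.integral_congr fun x hx => ?_
    rw [uIcc_of_le hT.le] at hx
    rw [Complex.ofReal_mul, Complex.ofReal_cpow hx.1,
      Complex.ofReal_cpow (by linarith [hx.2] : (0:ℝ) ≤ T - x)]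
    push_cast
    ring
  have hR : ((T:ℂ)) ^ ((a:ℂ) + (b:ℂ) - 1) = ((T ^ (a + b - 1) : ℝ) : ℂ) := by
    rw [Complex.ofReal_cpow hT.le]
    push_cast
    ring_nf
  rw [hL, hbeta, hR] at h1
  have h3 : ((∫ τ in (0:ℝ)..T, τ ^ (a - 1) * (T - τ) ^ (b - 1) : ℝ) : ℂ)
      = ((Real.Gamma a * Real.Gamma b / Real.Gamma (a+b) * T ^ (a+b-1) : ℝ) : ℂ) := by
    rw [h1]; push_cast; ring
  exact_mod_cast h3

lemma beta_integrableOn {a b T : ℝ} (ha : 0 < a) (hb : 0 < b) (hT : 0 < T) :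
    IntegrableOn (fun τ => τ ^ (a - 1) * (T - τ) ^ (b - 1)) (Ioc 0 T) := by
  have hhalf : (0:ℝ) < T / 2 := by linarith
  have hsplit : Ioc (0:ℝ) (T/2) ∪ Ioc (T/2) T = Ioc 0 T :=
    Ioc_union_Ioc_eq_Ioc hhalf.le (by linarith)
  rw [← hsplit]
  refine IntegrableOn.union ?_ ?_
  · -- on (0, T/2] : τ^(a-1) integrable, (T-τ)^(b-1) bounded
    have hg : IntegrableOn (fun τ : ℝ => τ ^ (a-1)) (Ioc 0 (T/2)) :=
      (intervalIntegrable_iff_integrableOn_Ioc_of_le hhalf.le).mp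
        (intervalIntegral.intervalIntegrable_rpow' (by linarith))
    have hmeas : AEStronglyMeasurable (fun τ : ℝ => (T - τ) ^ (b-1))
        (volume.restrict (Ioc 0 (T/2))) := by
      refine ContinuousOn.aestronglyMeasurable ?_ measurableSet_Ioc
      refine ContinuousOn.rpow_const ((continuous_const.sub continuous_id).continuousOn) ?_
      intro x hx
      exact Or.inl (sub_ne_zero.mpr (ne_of_gt (show x < T by linarith [hx.2])))
    have hbound : ∀ᵐ τ ∂(volume.restrict (Ioc 0 (T/2))),
        ‖(T - τ) ^ (b-1)‖ ≤ max ((T/2) ^ (b-1)) (T ^ (b-1)) := by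
      rw [ae_restrict_iff' measurableSet_Ioc]
      refine ae_of_all _ fun τ hτ => ?_
      have h1 : (0:ℝ) < τ := hτ.1
      have h2 : τ ≤ T / 2 := hτ.2
      have h3 : T / 2 ≤ T - τ := by linarith
      have h4 : T - τ ≤ T := by linarith
      rw [Real.norm_eq_abs, abs_of_nonneg (Real.rpow_nonneg (by linarith) _)]
      rcases le_total (b - 1) 0 with h | h
      · exact le_max_of_le_left (Real.rpow_le_rpow_of_nonpos hhalf h3 h)
      · exact le_max_of_le_right (Real.rpow_le_rpow (by linarith) h4 h)
    have h5 := Integrable.bdd_mul hg hmeas hbound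
    exact MeasureTheory.IntegrableOn.congr_fun h5 (fun τ _ => by ring) measurableSet_Ioc
  · -- on (T/2, T] : (T-τ)^(b-1) integrable, τ^(a-1) bounded
    have hg : IntegrableOn (fun τ : ℝ => (T - τ) ^ (b-1)) (Ioc (T/2) T) := by
      have h0 : IntervalIntegrable (fun x : ℝ => x ^ (b-1)) volume 0 (T/2) :=
        intervalIntegral.intervalIntegrable_rpow' (by linarith)
      have h1 := h0.comp_sub_left T
      rw [sub_zero] at h1
      have h2 : T - T/2 = T/2 := by ring
      rw [h2] at h1
      exact (intervalIntegrable_iff_integrableOn_Ioc_of_le (by linarith)).mp h1.symm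
    have hmeas : AEStronglyMeasurable (fun τ : ℝ => τ ^ (a-1))
        (volume.restrict (Ioc (T/2) T)) := by
      refine ContinuousOn.aestronglyMeasurable ?_ measurableSet_Ioc
      refine ContinuousOn.rpow_const continuous_id.continuousOn ?_
      intro x hx
      exact Or.inl (ne_of_gt (show (0:ℝ) < x by linarith [hx.1]))
    have hbound : ∀ᵐ τ ∂(volume.restrict (Ioc (T/2) T)),
        ‖τ ^ (a-1)‖ ≤ max ((T/2) ^ (a-1)) (T ^ (a-1)) := by
      rw [ae_restrict_iff' measurableSet_Ioc]
      refine ae_of_all _ fun τ hτ => ?_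
      have h1 : T / 2 < τ := hτ.1
      have h2 : τ ≤ T := hτ.2
      rw [Real.norm_eq_abs, abs_of_nonneg (Real.rpow_nonneg (by linarith) _)]
      rcases le_total (a - 1) 0 with h | h
      · exact le_max_of_le_left (Real.rpow_le_rpow_of_nonpos hhalf h1.le h)
      · exact le_max_of_le_right (Real.rpow_le_rpow (by linarith) h2 h)
    exact Integrable.bdd_mul hg hmeas hbound

theorem stmt_13 (α μ : ℝ) (hα : 0 < α) (hα1 : α < 1) (hμ : 0 < μ)
    (s : ℝ → ℝ) (hs : ∀ t : ℝ, s t = mittagLeffler α 1 (-(μ * t ^ α))) :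
    (∀ t : ℝ, 0 ≤ t → s t + μ * lconv (g α) s t = 1) ∧
    (∀ t : ℝ, 0 ≤ t →
      s t + (μ / Real.Gamma α)
          * ∫ τ in (0:ℝ)..t, (t - τ) ^ (α - 1) * mittagLeffler α 1 (-(μ * τ ^ α)) = 1) := by
  have hΓα : 0 < Real.Gamma α := Real.Gamma_pos_of_pos hα
  have hak1 : ∀ k : ℕ, 0 < α * (k:ℝ) + 1 := by
    intro k
    have := mul_nonneg hα.le (Nat.cast_nonneg (α := ℝ) k)
    linarith
  have hΓk : ∀ k : ℕ, 0 < Real.Gamma (α * (k:ℝ) + 1) :=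
    fun k => Real.Gamma_pos_of_pos (hak1 k)
  have hΓk2 : ∀ k : ℕ, 0 < Real.Gamma (α * (k:ℝ) + 1 + α) :=
    fun k => Real.Gamma_pos_of_pos (by linarith [hak1 k])
  have key : ∀ t : ℝ, 0 ≤ t →
      (μ / Real.Gamma α) *
        (∫ τ in (0:ℝ)..t, (t - τ) ^ (α - 1) * mittagLeffler α 1 (-(μ * τ ^ α))) = 1 - s t := by
    intro t ht
    rcases ht.eq_or_lt with h0 | ht'
    · -- t = 0
      rw [← h0]
      rw [intervalIntegral.integral_same, mul_zero]
      have hs0 : s 0 = 1 := by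
        rw [hs 0, mittagLeffler]
        have hz : (-(μ * (0:ℝ) ^ α)) = 0 := by rw [Real.zero_rpow hα.ne']; ring
        rw [hz]
        rw [tsum_eq_single 0 (fun k hk => by rw [zero_pow hk, zero_div])]
        norm_num [Real.Gamma_one]
      rw [hs0]; ring
    · -- t > 0
      set X : ℝ := -(μ * t ^ α) with hX
      set c : ℕ → ℝ := fun k => (-μ) ^ k / Real.Gamma (α * (k:ℝ) + 1) with hc
      have htα : (0:ℝ) < t ^ α := Real.rpow_pos_of_pos ht' α
      have hB : ∀ k : ℕ, ∫ τ in Ioc (0:ℝ) t, τ ^ (α * (k:ℝ) + 1 - 1) * (t - τ) ^ (α - 1)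
          = Real.Gamma (α * (k:ℝ) + 1) * Real.Gamma α / Real.Gamma (α * (k:ℝ) + 1 + α)
              * t ^ (α * (k:ℝ) + 1 + α - 1) := by
        intro k
        rw [← intervalIntegral.integral_of_le ht]
        exact beta_eval (hak1 k) hα ht'
      have hFint : ∀ k : ℕ,
          IntegrableOn (fun τ => (t - τ) ^ (α - 1) * (c k * τ ^ (α * (k:ℝ)))) (Ioc 0 t) := by
        intro k
        have h1 := (beta_integrableOn (a := α * (k:ℝ) + 1) (hak1 k) hα ht').const_mul (c k)
        refine MeasureTheory.IntegrableOn.congr_fun h1 (fun τ _ => ?_) measurableSet_Ioc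
        rw [add_sub_cancel_right]
        ring
      have htak : ∀ k : ℕ, (t ^ α) ^ k = t ^ (α * (k:ℝ)) := by
        intro k
        rw [← Real.rpow_natCast (t ^ α) k, ← Real.rpow_mul ht]
      have htexp : ∀ k : ℕ, t ^ (α * (k:ℝ) + 1 + α - 1) = t ^ (α * (k:ℝ)) * t ^ α := by
        intro k
        rw [show α * (k:ℝ) + 1 + α - 1 = α * (k:ℝ) + α by ring, Real.rpow_add ht']
      have hnorm : ∀ k : ℕ,
          (∫ τ in Ioc (0:ℝ) t, ‖(t - τ) ^ (α - 1) * (c k * τ ^ (α * (k:ℝ)))‖)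
            = (μ ^ k / Real.Gamma (α * (k:ℝ) + 1)) *
              (Real.Gamma (α * (k:ℝ) + 1) * Real.Gamma α / Real.Gamma (α * (k:ℝ) + 1 + α)
                * t ^ (α * (k:ℝ) + 1 + α - 1)) := by
        intro k
        have e : EqOn (fun τ : ℝ => ‖(t - τ) ^ (α - 1) * (c k * τ ^ (α * (k:ℝ)))‖)
            (fun τ : ℝ => (μ ^ k / Real.Gamma (α * (k:ℝ) + 1)) *
              (τ ^ (α * (k:ℝ) + 1 - 1) * (t - τ) ^ (α - 1))) (Ioc 0 t) := by
          intro τ hτ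
          have h1 : (0:ℝ) < τ := hτ.1
          have h2 : (0:ℝ) ≤ t - τ := by linarith [hτ.2]
          simp only [Real.norm_eq_abs, abs_mul, hc]
          rw [abs_of_nonneg (Real.rpow_nonneg h2 _), abs_div, abs_pow, abs_neg,
            abs_of_pos hμ, abs_of_pos (hΓk k), abs_of_nonneg (Real.rpow_nonneg h1.le _),
            add_sub_cancel_right]
          ring
        rw [setIntegral_congr_fun measurableSet_Ioc e, MeasureTheory.integral_const_mul, hB k]
      have hsumnorm : Summable (fun k : ℕ =>
          ∫ τ in Ioc (0:ℝ) t, ‖(t - τ) ^ (α - 1) * (c k * τ ^ (α * (k:ℝ)))‖) := by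
        refine Summable.congr (f := fun k : ℕ =>
          (Real.Gamma α * t ^ α) * ((μ * t ^ α) ^ k / Real.Gamma (α * (k:ℝ) + (α + 1)))) ?_ ?_
        · exact (ml_summable hα (by linarith) (μ * t ^ α)).mul_left _
        · intro k
          rw [hnorm k]
          rw [show α * (k:ℝ) + (α + 1) = α * (k:ℝ) + 1 + α by ring, mul_pow, htak k, htexp k]
          field_simp
      have hswap := MeasureTheory.integral_tsum_of_summable_integral_norm
        (μ := volume.restrict (Ioc (0:ℝ) t))
        (F := fun (k : ℕ) (τ : ℝ) => (t - τ) ^ (α - 1) * (c k * τ ^ (α * (k:ℝ))))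
        hFint hsumnorm
      have hptwise : EqOn (fun τ : ℝ => (t - τ) ^ (α - 1) * mittagLeffler α 1 (-(μ * τ ^ α)))
          (fun τ : ℝ => ∑' k : ℕ, (t - τ) ^ (α - 1) * (c k * τ ^ (α * (k:ℝ)))) (Ioc 0 t) := by
        intro τ hτ
        simp only [mittagLeffler]
        rw [tsum_mul_left]
        congr 1
        refine tsum_congr fun k => ?_
        rw [show (-(μ * τ ^ α)) = (-μ) * τ ^ α by ring, mul_pow, hc]
        rw [show (τ ^ α) ^ k = τ ^ (α * (k:ℝ)) by
          rw [← Real.rpow_natCast (τ ^ α) k, ← Real.rpow_mul hτ.1.le]]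
        ring
      have hval : ∀ k : ℕ,
          (∫ τ in Ioc (0:ℝ) t, (t - τ) ^ (α - 1) * (c k * τ ^ (α * (k:ℝ))))
            = -(Real.Gamma α / μ) * (X ^ (k+1) / Real.Gamma (α * ((k:ℝ) + 1) + 1)) := by
        intro k
        have e : EqOn (fun τ : ℝ => (t - τ) ^ (α - 1) * (c k * τ ^ (α * (k:ℝ))))
            (fun τ : ℝ => c k * (τ ^ (α * (k:ℝ) + 1 - 1) * (t - τ) ^ (α - 1))) (Ioc 0 t) := by
          intro τ _
          rw [add_sub_cancel_right]
          ring
        rw [setIntegral_congr_fun measurableSet_Ioc e, MeasureTheory.integral_const_mul, hB k]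
        rw [hX, show (-(μ * t ^ α)) = (-μ) * t ^ α by ring, mul_pow, pow_succ, pow_succ, htak k, htexp k,
          hc, show α * ((k:ℝ) + 1) + 1 = α * (k:ℝ) + 1 + α by ring]
        field_simp
      -- assemble
      have hIoc : (∫ τ in (0:ℝ)..t, (t - τ) ^ (α - 1) * mittagLeffler α 1 (-(μ * τ ^ α)))
          = ∑' k : ℕ, -(Real.Gamma α / μ) * (X ^ (k+1) / Real.Gamma (α * ((k:ℝ) + 1) + 1)) := by
        rw [intervalIntegral.integral_of_le ht,
          setIntegral_congr_fun measurableSet_Ioc hptwise, ← hswap]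
        exact tsum_congr hval
      rw [hIoc, tsum_mul_left]
      have hst : s t = 1 + ∑' k : ℕ, X ^ (k+1) / Real.Gamma (α * ((k:ℝ) + 1) + 1) := by
        rw [hs t, mittagLeffler, ← hX]
        have hsum1 : Summable (fun k : ℕ => X ^ k / Real.Gamma (α * (k:ℝ) + 1)) :=
          ml_summable hα le_rfl X
        rw [hsum1.tsum_eq_zero_add]
        congr 1
        · norm_num [Real.Gamma_one]
        · exact tsum_congr fun k => by push_cast; ring_nf
      rw [hst]
      field_simp
      ring
  refine ⟨fun t ht => ?_, fun t ht => ?_⟩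
  · have hk := key t ht
    have hl : lconv (g α) s t = (Real.Gamma α)⁻¹ *
        ∫ τ in (0:ℝ)..t, (t - τ) ^ (α - 1) * mittagLeffler α 1 (-(μ * τ ^ α)) := by
      rw [lconv, ← intervalIntegral.integral_const_mul]
      refine intervalIntegral.integral_congr fun τ _ => ?_
      rw [g, hs τ]
      ring
    rw [hl]
    have : μ * ((Real.Gamma α)⁻¹ *
        ∫ τ in (0:ℝ)..t, (t - τ) ^ (α - 1) * mittagLeffler α 1 (-(μ * τ ^ α)))
        = (μ / Real.Gamma α) *
        ∫ τ in (0:ℝ)..t, (t - τ) ^ (α - 1) * mittagLeffler α 1 (-(μ * τ ^ α)) := by ring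
    rw [this, hk]
    ring
  · rw [key t ht]
    ring
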